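/- Let M, N, L be positive integers with L ≥ 2 and let f be the piecewise linear DMT function (f(k) = (M-k)(N-k) at integers, zero beyond min(M,N)). For any x with 0 < x < min(M,N), one has L·f(x/L) > f(x); i.e., the optimal DMT of a parallel channel of L i.i.d. M×N MIMO sub-channels, d(r) = L·f(r/L), strictly dominates the single-channel DMT at every multiplexing gain r = x ∈ (0, min(M,N)). -/
import Mathlib


/-- The DMT curve of an M×N MIMO channel: piecewise linear through the points
`(k, (M-k)(N-k))` for integers `k = 0, ..., min M N`, and zero for `x ≥ min M N`. -/
noncomputable def dmt (M N : ℕ) (x : ℝ) : ℝ :=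
  if (min M N : ℝ) ≤ x then 0
  else
    let k : ℝ := (⌊x⌋ : ℝ)
    ((M : ℝ) - k) * ((N : ℝ) - k) +
      (x - k) * (((M : ℝ) - k - 1) * ((N : ℝ) - k - 1) - ((M : ℝ) - k) * ((N : ℝ) - k))


lemma dmt_eval (M N : ℕ) (y : ℝ) (hy : y < (min M N : ℝ)) :
    dmt M N y = ((M : ℝ) - ⌊y⌋) * ((N : ℝ) - ⌊y⌋) +
      (y - ⌊y⌋) * (((M : ℝ) - ⌊y⌋ - 1) * ((N : ℝ) - ⌊y⌋ - 1) - ((M : ℝ) - ⌊y⌋) * ((N : ℝ) - ⌊y⌋)) := by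
  simp only [dmt, if_neg (not_le.mpr hy)]

lemma floor_le_sub_one (M N : ℕ) (y : ℝ) (hy : y < (min M N : ℝ)) :
    ((⌊y⌋ : ℝ)) ≤ (min M N : ℝ) - 1 := by
  have h : ⌊y⌋ < ((min M N : ℕ) : ℤ) := by
    rw [Int.floor_lt]; push_cast; exact hy
  have h2 : ⌊y⌋ ≤ ((min M N : ℕ) : ℤ) - 1 := by omega
  calc ((⌊y⌋ : ℝ)) ≤ (((min M N : ℕ) : ℤ) - 1 : ℤ) := by exact_mod_cast h2
    _ = (min M N : ℝ) - 1 := by push_cast; ring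


set_option maxHeartbeats 1600000 in
/-- The parallel-channel DMT L·f(x/L) strictly dominates the single-channel DMT f(x)
for every x ∈ (0, min(M,N)). -/
theorem stmt9 (M N L : ℕ) (hM : 0 < M) (hN : 0 < N) (hL : 2 ≤ L)
    (x : ℝ) (hx0 : 0 < x) (hx1 : x < (min M N : ℝ)) :
    (L : ℝ) * dmt M N (x / L) > dmt M N x := by
  have hLR : (2 : ℝ) ≤ (L : ℝ) := by exact_mod_cast hL
  have hLpos : (0 : ℝ) < L := by linarith
  obtain ⟨a, ha⟩ : ∃ a : ℝ, a = x / (L:ℝ) := ⟨_, rfl⟩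
  rw [show x / (L:ℝ) = a from ha.symm]
  have ha0 : 0 < a := ha ▸ div_pos hx0 hLpos
  have hax : a < x := by
    rw [ha, div_lt_iff₀ hLpos]; nlinarith
  have ha1 : a < (min M N : ℝ) := lt_trans hax hx1
  have hmM : (min M N : ℝ) ≤ M := by exact_mod_cast Nat.cast_le.mpr (min_le_left M N)
  have hmN : (min M N : ℝ) ≤ N := by exact_mod_cast Nat.cast_le.mpr (min_le_right M N)
  -- floor facts
  have hka0 : (0 : ℝ) ≤ (⌊a⌋ : ℝ) := by exact_mod_cast Int.floor_nonneg.mpr ha0.le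
  have hkx0 : (0 : ℝ) ≤ (⌊x⌋ : ℝ) := by exact_mod_cast Int.floor_nonneg.mpr hx0.le
  have hka1 : ((⌊a⌋ : ℝ)) ≤ (min M N : ℝ) - 1 := floor_le_sub_one M N a ha1
  have hkx1 : ((⌊x⌋ : ℝ)) ≤ (min M N : ℝ) - 1 := floor_le_sub_one M N x hx1
  have hfa := Int.floor_le a
  have hfa' := Int.lt_floor_add_one a
  have hfx := Int.floor_le x
  have hfx' := Int.lt_floor_add_one x
  rw [dmt_eval M N a ha1, dmt_eval M N x hx1]
  -- positivity of the value at a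
  have hpos : 0 < ((M : ℝ) - ((⌊a⌋:ℝ))) * ((N : ℝ) - ((⌊a⌋:ℝ))) +
      (a - ((⌊a⌋:ℝ))) * (((M : ℝ) - ((⌊a⌋:ℝ)) - 1) * ((N : ℝ) - ((⌊a⌋:ℝ)) - 1) - ((M : ℝ) - ((⌊a⌋:ℝ))) * ((N : ℝ) - ((⌊a⌋:ℝ)))) := by
    nlinarith [mul_nonneg (sub_nonneg.mpr hfa) (sub_nonneg.mpr (by nlinarith : ((⌊a⌋:ℝ)) ≤ (M:ℝ) - 1)),
      mul_nonneg (sub_nonneg.mpr hfa) (sub_nonneg.mpr (by nlinarith : ((⌊a⌋:ℝ)) ≤ (N:ℝ) - 1))]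
  -- monotonicity: value at x ≤ value at a
  have hmono : ((M : ℝ) - ((⌊x⌋:ℝ))) * ((N : ℝ) - ((⌊x⌋:ℝ))) +
      (x - ((⌊x⌋:ℝ))) * (((M : ℝ) - ((⌊x⌋:ℝ)) - 1) * ((N : ℝ) - ((⌊x⌋:ℝ)) - 1) - ((M : ℝ) - ((⌊x⌋:ℝ))) * ((N : ℝ) - ((⌊x⌋:ℝ)))) ≤
      ((M : ℝ) - ((⌊a⌋:ℝ))) * ((N : ℝ) - ((⌊a⌋:ℝ))) +
      (a - ((⌊a⌋:ℝ))) * (((M : ℝ) - ((⌊a⌋:ℝ)) - 1) * ((N : ℝ) - ((⌊a⌋:ℝ)) - 1) - ((M : ℝ) - ((⌊a⌋:ℝ))) * ((N : ℝ) - ((⌊a⌋:ℝ)))) := by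
    have hkka : ⌊a⌋ ≤ ⌊x⌋ := Int.floor_le_floor hax.le
    rcases eq_or_lt_of_le hkka with heq | hlt
    · have hkeq : ((⌊a⌋:ℝ)) = ((⌊x⌋:ℝ)) := by exact_mod_cast heq
      rw [hkeq]
      have hs : (0:ℝ) ≤ (M:ℝ) + N - 2*((⌊x⌋:ℝ)) - 1 := by linarith
      nlinarith [mul_nonneg (sub_nonneg.mpr hax.le) hs]
    · have hstep : ((⌊a⌋:ℝ)) + 1 ≤ ((⌊x⌋:ℝ)) := by
        have : ⌊a⌋ + 1 ≤ ⌊x⌋ := hlt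
        exact_mod_cast this
      -- f(x) ≤ (M-((⌊x⌋:ℝ)))(N-((⌊x⌋:ℝ))) ≤ (M-((⌊a⌋:ℝ))-1)(N-((⌊a⌋:ℝ))-1) ≤ f(a)
      have h1 : ((M : ℝ) - ((⌊x⌋:ℝ))) * ((N : ℝ) - ((⌊x⌋:ℝ))) +
          (x - ((⌊x⌋:ℝ))) * (((M : ℝ) - ((⌊x⌋:ℝ)) - 1) * ((N : ℝ) - ((⌊x⌋:ℝ)) - 1) - ((M : ℝ) - ((⌊x⌋:ℝ))) * ((N : ℝ) - ((⌊x⌋:ℝ)))) ≤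
          ((M : ℝ) - ((⌊x⌋:ℝ))) * ((N : ℝ) - ((⌊x⌋:ℝ))) := by
        have hs : (0:ℝ) ≤ (M:ℝ) + N - 2*((⌊x⌋:ℝ)) - 1 := by linarith
        nlinarith [mul_nonneg (sub_nonneg.mpr hfx) hs]
      have h2 : ((M : ℝ) - ((⌊x⌋:ℝ))) * ((N : ℝ) - ((⌊x⌋:ℝ))) ≤ ((M : ℝ) - ((⌊a⌋:ℝ)) - 1) * ((N : ℝ) - ((⌊a⌋:ℝ)) - 1) := by
        have h1 : (0:ℝ) ≤ ((⌊x⌋:ℝ)) - (((⌊a⌋:ℝ)) + 1) := by linarith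
        have h2 : (0:ℝ) ≤ (M:ℝ) + N - (((⌊a⌋:ℝ)) + 1) - ((⌊x⌋:ℝ)) := by linarith
        nlinarith [mul_nonneg h1 h2]
      have h3 : ((M : ℝ) - ((⌊a⌋:ℝ)) - 1) * ((N : ℝ) - ((⌊a⌋:ℝ)) - 1) ≤
          ((M : ℝ) - ((⌊a⌋:ℝ))) * ((N : ℝ) - ((⌊a⌋:ℝ))) +
          (a - ((⌊a⌋:ℝ))) * (((M : ℝ) - ((⌊a⌋:ℝ)) - 1) * ((N : ℝ) - ((⌊a⌋:ℝ)) - 1) - ((M : ℝ) - ((⌊a⌋:ℝ))) * ((N : ℝ) - ((⌊a⌋:ℝ)))) := by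
        have h1 : (0:ℝ) ≤ 1 - (a - ((⌊a⌋:ℝ))) := by linarith
        have h2 : (0:ℝ) ≤ (M:ℝ) + N - 2*((⌊a⌋:ℝ)) - 1 := by linarith
        nlinarith [mul_nonneg h1 h2]
      linarith
  nlinarith [hpos, hmono, mul_nonneg (by linarith : (0:ℝ) ≤ (L:ℝ) - 2) hpos.le]
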